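/- Let f ∈ Γ₀(ℝ^n) be sparsity promoting, α > 0, and f_α = f − env_{αf}. Then for every x in the relative interior of α∂f(0), prox_{αf_α}(x) = {0}: 0 is the only minimizer of u ↦ f_α(u) + (1/(2α))‖u−x‖². -/

import Mathlib

open Set
open scoped RealInnerProductSpace Pointwise

noncomputable section

abbrev E (n : ℕ) := EuclideanSpace ℝ (Fin n)

/-- Convex subdifferential. -/
def subdiff {n : ℕ} (f : E n → ℝ) (x : E n) : Set (E n) :=
  {d | ∀ y, f x + ⟪d, y - x⟫ ≤ f y}

/-- Fréchet subdifferential. -/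
def fsubdiff {n : ℕ} (f : E n → ℝ) (x : E n) : Set (E n) :=
  {d | ∀ ε > (0:ℝ), ∃ δ > (0:ℝ), ∀ u, ‖u - x‖ < δ →
    f x + ⟪d, u - x⟫ - ε * ‖u - x‖ ≤ f u}

/-- Sparsity promoting: value 0 at the origin is the global minimum and the
subdifferential at 0 contains a nonzero element. -/
def SparsityPromoting {n : ℕ} (f : E n → ℝ) : Prop :=
  f 0 = 0 ∧ (∀ x, f 0 ≤ f x) ∧ ∃ d ∈ subdiff f 0, d ≠ 0

/-- Moreau envelope with parameter `α`. -/
def env {n : ℕ} (α : ℝ) (f : E n → ℝ) (x : E n) : ℝ :=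
  sInf (Set.range fun u => f u + ‖u - x‖ ^ 2 / (2 * α))

/-- Proximity operator (as a set of minimizers). -/
def proxSet {n : ℕ} (α : ℝ) (f : E n → ℝ) (x : E n) : Set (E n) :=
  {p | ∀ u, f p + ‖p - x‖ ^ 2 / (2 * α) ≤ f u + ‖u - x‖ ^ 2 / (2 * α)}

/-- From a point in the intrinsic interior we can move past it away from any
point of the set and stay in the set (for small step). -/
lemma exists_extend_of_mem_intrinsicInterior {n : ℕ} {s : Set (E n)} {x y : E n}
    (hx : x ∈ intrinsicInterior ℝ s) (hy : y ∈ s) :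
    ∃ t : ℝ, 0 < t ∧ x + t • (x - y) ∈ s := by
  rw [mem_intrinsicInterior] at hx
  obtain ⟨z, hz, hzx⟩ := hx
  have hxA : x ∈ affineSpan ℝ s := hzx ▸ z.2
  have hyA : y ∈ affineSpan ℝ s := subset_affineSpan ℝ s hy
  have hdir : x - y ∈ (affineSpan ℝ s).direction :=
    AffineSubspace.vsub_mem_direction hxA hyA
  have hmem : ∀ t : ℝ, x + t • (x - y) ∈ affineSpan ℝ s := by
    intro t
    have := AffineSubspace.vadd_mem_of_mem_direction
      (Submodule.smul_mem _ t hdir) hxA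
    simpa [vadd_eq_add, add_comm] using this
  set c : ℝ → affineSpan ℝ s := fun t => ⟨x + t • (x - y), hmem t⟩ with hc
  have hcont : Continuous c := by
    apply Continuous.subtype_mk
    continuity
  have hc0 : c 0 = z := by
    apply Subtype.ext
    simp [hc, hzx]
  have hev : ∀ᶠ t in nhds (0:ℝ), c t ∈ interior ((↑) ⁻¹' s : Set (affineSpan ℝ s)) := by
    have : interior ((↑) ⁻¹' s : Set (affineSpan ℝ s)) ∈ nhds (c 0) := by
      rw [hc0]; exact isOpen_interior.mem_nhds hz
    exact hcont.continuousAt.eventually_mem this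
  rw [Metric.eventually_nhds_iff] at hev
  obtain ⟨δ, hδ, hδ'⟩ := hev
  refine ⟨δ/2, by positivity, ?_⟩
  have : c (δ/2) ∈ interior ((↑) ⁻¹' s : Set (affineSpan ℝ s)) := by
    apply hδ'
    simp only [dist_zero_right, Real.norm_eq_abs]
    rw [abs_of_pos (by positivity)]
    linarith
  have h2 : c (δ/2) ∈ ((↑) ⁻¹' s : Set (affineSpan ℝ s)) := interior_subset this
  simpa [hc] using h2

theorem stmt11 {n : ℕ} (f : E n → ℝ) (hconv : ConvexOn ℝ Set.univ f)
    (hlsc : LowerSemicontinuous f) (hsp : SparsityPromoting f)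
    (α : ℝ) (hα : 0 < α) (x : E n)
    (hx : x ∈ intrinsicInterior ℝ (α • subdiff f 0)) :
    proxSet α (fun u => f u - env α f u) x = {0} := by
  obtain ⟨hf0, hmin, -⟩ := hsp
  have hfnn : ∀ u, 0 ≤ f u := fun u => hf0 ▸ hmin u
  -- x = α • w with w a subgradient at 0
  obtain ⟨w, hwS, hxw⟩ := intrinsicInterior_subset hx
  have hw : ∀ u : E n, ⟪w, u⟫ ≤ f u := by
    intro u
    have := hwS u
    simpa [hf0] using this
  -- basic facts about env
  have hbdd : ∀ u : E n, BddBelow (Set.range fun v => f v + ‖v - u‖ ^ 2 / (2 * α)) := by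
    intro u
    refine ⟨0, ?_⟩
    rintro r ⟨v, rfl⟩
    have : (0:ℝ) ≤ ‖v - u‖ ^ 2 / (2 * α) := by positivity
    have := hfnn v
    linarith
  have henv_le : ∀ u v : E n, env α f u ≤ f v + ‖v - u‖ ^ 2 / (2 * α) := by
    intro u v
    exact csInf_le (hbdd u) ⟨v, rfl⟩
  have henv_nn : ∀ u : E n, 0 ≤ env α f u := by
    intro u
    apply le_csInf (Set.range_nonempty _)
    rintro r ⟨v, rfl⟩
    have : (0:ℝ) ≤ ‖v - u‖ ^ 2 / (2 * α) := by positivity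
    have := hfnn v
    linarith
  have henv0 : env α f 0 = 0 := by
    refine le_antisymm ?_ (henv_nn 0)
    have := henv_le 0 0
    simpa [hf0] using this
  -- for each u, the key lower bound with equality structure
  have hxu : ∀ u : E n, ⟪x, u⟫ = α * ⟪w, u⟫ := by
    intro u; rw [← hxw, real_inner_smul_left]
  have hnormid : ∀ u : E n, ‖u - x‖ ^ 2 = ‖u‖ ^ 2 - 2 * (α * ⟪w, u⟫) + ‖x‖ ^ 2 := by
    intro u
    rw [← hxu u, ← real_inner_self_eq_norm_sq, ← real_inner_self_eq_norm_sq,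
      ← real_inner_self_eq_norm_sq, inner_sub_sub_self]
    rw [real_inner_comm x u]
    ring
  have hα' : (2 : ℝ) * α ≠ 0 := by positivity
  -- key inequality: objective at any u is ≥ ‖x‖²/(2α) = objective at 0
  have hkey : ∀ u : E n, ‖x‖ ^ 2 / (2 * α) ≤ f u - env α f u + ‖u - x‖ ^ 2 / (2 * α) := by
    intro u
    have h1 : env α f u ≤ ‖u‖ ^ 2 / (2 * α) := by
      have := henv_le u 0
      simpa [hf0, norm_sub_rev] using this
    have h2 := hw u
    have h3 := hnormid u
    have h4 : ‖u - x‖ ^ 2 / (2*α) = ‖u‖ ^ 2 / (2*α) - ⟪w, u⟫ + ‖x‖ ^ 2 / (2*α) := by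
      field_simp [h3]; linear_combination h3
    linarith
  ext p
  simp only [Set.mem_singleton_iff]
  constructor
  · intro hp
    -- p is a minimizer; compare with 0
    have hp0 := hp 0
    simp only [hf0, henv0] at hp0
    have hval : f p - env α f p + ‖p - x‖ ^ 2 / (2 * α) = ‖x‖ ^ 2 / (2 * α) := by
      have := hkey p
      have h0 : (0:ℝ) - 0 + ‖0 - x‖ ^ 2 / (2*α) = ‖x‖ ^ 2 / (2*α) := by
        simp [norm_sub_rev]
      rw [h0] at hp0
      linarith
    -- extract the two equalities
    have h1 : env α f p ≤ ‖p‖ ^ 2 / (2 * α) := by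
      have := henv_le p 0
      simpa [hf0, norm_sub_rev] using this
    have h2 := hw p
    have h4 : ‖p - x‖ ^ 2 / (2*α) = ‖p‖ ^ 2 / (2*α) - ⟪w, p⟫ + ‖x‖ ^ 2 / (2*α) := by
      field_simp [hnormid p]; linear_combination hnormid p
    have heq1 : env α f p = ‖p‖ ^ 2 / (2 * α) := by linarith
    have heq2 : f p = ⟪w, p⟫ := by linarith
    -- env α f p ≤ f p gives ‖p‖²/(2α) ≤ ⟪w,p⟫
    have h5 : ‖p‖ ^ 2 / (2 * α) ≤ ⟪w, p⟫ := by
      have := henv_le p p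
      simp only [sub_self, norm_zero] at this
      rw [heq1, heq2] at this
      simpa using this
    -- intrinsic interior: extend past x
    have h0S : (0 : E n) ∈ α • subdiff f 0 := by
      refine ⟨0, ?_, by simp⟩
      intro y; simp [hf0, hfnn y]
    obtain ⟨t, ht, hts⟩ := exists_extend_of_mem_intrinsicInterior hx h0S
    obtain ⟨w', hw'S, hw'⟩ := hts
    have hxw' : α • w = x := hxw
    have hw'eq : w' = (1 + t) • w := by
      have h' : α • w' = (1+t) • x := by
        have := hw'
        simp only [sub_zero] at this
        rw [show x + t • x = (1+t) • x by module] at this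
        exact this
      have : α • w' = α • ((1+t) • w) := by
        rw [h', ← hxw']
        module
      exact smul_right_injective _ (ne_of_gt hα) this
    -- subgradient inequality for w' at p, using f p = ⟪w,p⟫
    have hw'p : ⟪w', p⟫ ≤ f p := by
      have := hw'S p
      simpa [hf0] using this
    rw [heq2, hw'eq] at hw'p
    rw [real_inner_smul_left] at hw'p
    have hwp : ⟪w, p⟫ ≤ 0 := by nlinarith
    have hpsq : ‖p‖ ^ 2 ≤ 0 := by
      have h6 : ‖p‖ ^ 2 / (2 * α) ≤ 0 := le_trans h5 hwp
      have h2α : (0:ℝ) < 2 * α := by positivity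
      have := mul_le_mul_of_nonneg_right h6 h2α.le
      rw [div_mul_cancel₀ _ (ne_of_gt h2α)] at this
      linarith
    have : ‖p‖ = 0 := by nlinarith [norm_nonneg p]
    exact norm_eq_zero.mp this
  · rintro rfl
    intro u
    have := hkey u
    simp only [hf0, henv0]
    calc (0:ℝ) - 0 + ‖0 - x‖ ^ 2 / (2*α) = ‖x‖ ^ 2 / (2*α) := by simp [norm_sub_rev]
    _ ≤ _ := hkey u
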